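/- Let d ≥ 1, 1 ≤ s ≤ d, γ > 1, 0 < τ < γ − 1, λ > 0, κ > 0, and set c₀ = (γ+τ+1)/(γ−τ−1). Let Ĉ be a real d×d symmetric positive semidefinite matrix and ε a real d×d matrix such that: (i) for every u in the cone C(s,c₀), uᵀĈu ≥ κ²·‖u‖₂²; and (ii) every entry of ε has absolute value at most λ/γ. Let A₀ be a row-s-sparse d×d matrix and let Â be a minimizer over d×d matrices of L(A) = tr(Aᵀε) + ½·tr((A−A₀)Ĉ(A−A₀)ᵀ) + λ·|A|₁. Then |Â − A₀|₁ ≤ ((1+τ+γ)²/(2γτκ²))·λ·d·s. -/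

import Mathlib

open Matrix

/-- Entrywise ℓ¹ norm of a matrix. -/
noncomputable def matL1 {d : ℕ} (M : Matrix (Fin d) (Fin d) ℝ) : ℝ :=
  ∑ i, ∑ j, |M i j|

/-- The Lasso objective `L(A) = tr(Aᵀ ε) + ½ tr((A - A₀) Ĉ (A - A₀)ᵀ) + λ |A|₁`. -/
noncomputable def lassoObj {d : ℕ} (Chat eps A₀ : Matrix (Fin d) (Fin d) ℝ) (lam : ℝ)
    (A : Matrix (Fin d) (Fin d) ℝ) : ℝ :=
  (Aᵀ * eps).trace + (1 / 2) * ((A - A₀) * Chat * (A - A₀)ᵀ).trace + lam * matL1 A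

/-- The cone `C(s, c₀)`: vectors whose ℓ¹ norm is at most `(1 + c₀)` times the ℓ¹ norm
of their `s` largest (in absolute value) entries. -/
def inCone {d : ℕ} (s : ℕ) (c₀ : ℝ) (u : Fin d → ℝ) : Prop :=
  ∃ I : Finset (Fin d), I.card = s ∧ (∀ i ∈ I, ∀ j ∉ I, |u j| ≤ |u i|) ∧
    ∑ j, |u j| ≤ (1 + c₀) * ∑ i ∈ I, |u i|

/-- A matrix is row-`s`-sparse if every row has at most `s` nonzero entries. -/
def rowSparse {d : ℕ} (s : ℕ) (A : Matrix (Fin d) (Fin d) ℝ) : Prop :=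
  ∀ i, {j | A i j ≠ 0}.ncard ≤ s


lemma topset {d : ℕ} (s : ℕ) (hsd : s ≤ d) (u : Fin d → ℝ) :
    ∃ I : Finset (Fin d), I.card = s ∧ (∀ i ∈ I, ∀ j ∉ I, |u j| ≤ |u i|) ∧
      ∀ S : Finset (Fin d), S.card ≤ s → ∑ j ∈ S, |u j| ≤ ∑ i ∈ I, |u i| := by
  have hne : (Finset.univ.powersetCard s (α := Fin d)).Nonempty := by
    rw [Finset.powersetCard_nonempty]
    simpa using hsd
  obtain ⟨I, hI, hmax⟩ := Finset.exists_max_image _ (fun I => ∑ i ∈ I, |u i|) hne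
  rw [Finset.mem_powersetCard_univ] at hI
  have hmax' : ∀ J : Finset (Fin d), J.card = s → ∑ i ∈ J, |u i| ≤ ∑ i ∈ I, |u i| := by
    intro J hJ
    exact hmax J (Finset.mem_powersetCard_univ.2 hJ)
  refine ⟨I, hI, ?_, ?_⟩
  · intro i hi j hj
    by_contra h
    push_neg at h
    have hs1 : 1 ≤ s := hI ▸ Finset.card_pos.2 ⟨i, hi⟩
    have hjni : j ∉ I.erase i := fun hh => hj (Finset.mem_of_mem_erase hh)
    have hcard : (insert j (I.erase i)).card = s := by
      rw [Finset.card_insert_of_notMem hjni, Finset.card_erase_of_mem hi, hI]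
      omega
    have := hmax' _ hcard
    rw [Finset.sum_insert hjni] at this
    have hsplit : ∑ k ∈ I, |u k| = |u i| + ∑ k ∈ I.erase i, |u k| :=
      (Finset.add_sum_erase _ _ hi).symm
    linarith
  · intro S hS
    obtain ⟨T, hST, hT⟩ := Finset.exists_superset_card_eq hS (by simpa using hsd)
    calc ∑ j ∈ S, |u j| ≤ ∑ j ∈ T, |u j| :=
          Finset.sum_le_sum_of_subset_of_nonneg hST (fun _ _ _ => abs_nonneg _)
      _ ≤ ∑ i ∈ I, |u i| := hmax' T hT

noncomputable def rowObj {d : ℕ} (Chat : Matrix (Fin d) (Fin d) ℝ) (e a₀ : Fin d → ℝ)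
    (lam : ℝ) (v : Fin d → ℝ) : ℝ :=
  (∑ j, v j * e j) + (1 / 2) * ((v - a₀) ⬝ᵥ Chat *ᵥ (v - a₀)) + lam * ∑ j, |v j|

lemma lassoObj_eq_sum {d : ℕ} (Chat eps A₀ : Matrix (Fin d) (Fin d) ℝ) (lam : ℝ)
    (A : Matrix (Fin d) (Fin d) ℝ) :
    lassoObj Chat eps A₀ lam A = ∑ i, rowObj Chat (eps i) (A₀ i) lam (A i) := by
  simp only [lassoObj, rowObj, matL1, Matrix.trace, Matrix.diag, Matrix.mul_apply,
    Matrix.transpose_apply, Matrix.sub_apply, dotProduct, Matrix.mulVec, Pi.sub_apply,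
    Finset.mul_sum, Finset.sum_add_distrib]
  congr 1
  congr 1
  · rw [Finset.sum_comm]
  · refine Finset.sum_congr rfl fun i _ => ?_
    simp only [Finset.sum_mul, Finset.mul_sum]
    rw [Finset.sum_comm]
    exact Finset.sum_congr rfl fun j _ => Finset.sum_congr rfl fun k _ => by ring

set_option maxHeartbeats 1000000 in
lemma row_bound {d : ℕ} (s : ℕ) (hsd : s ≤ d)
    (γ τ lam κ : ℝ) (hγ : 1 < γ) (hτ0 : 0 < τ) (hτ : τ < γ - 1)
    (hlam : 0 < lam) (hκ : 0 < κ)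
    (c₀ : ℝ) (hc₀ : c₀ = (γ + τ + 1) / (γ - τ - 1))
    (Chat : Matrix (Fin d) (Fin d) ℝ) (hC : Chat.PosSemidef)
    (hRE : ∀ u : Fin d → ℝ, inCone s c₀ u → κ ^ 2 * ∑ i, u i ^ 2 ≤ u ⬝ᵥ Chat *ᵥ u)
    (e a₀ v : Fin d → ℝ) (he : ∀ j, |e j| ≤ lam / γ)
    (ha₀ : (Finset.univ.filter (fun j => a₀ j ≠ 0)).card ≤ s)
    (hmin : rowObj Chat e a₀ lam v ≤ rowObj Chat e a₀ lam a₀) :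
    ∑ j, |v j - a₀ j| ≤ (1 + τ + γ) ^ 2 / (2 * γ * τ * κ ^ 2) * lam * s := by
  have hγ0 : (0:ℝ) < γ := by linarith
  set u : Fin d → ℝ := v - a₀ with hu
  have hua : ∀ j, u j = v j - a₀ j := fun j => rfl
  set S : Finset (Fin d) := Finset.univ.filter (fun j => a₀ j ≠ 0) with hS
  set a : ℝ := ∑ j ∈ S, |u j| with ha
  set b : ℝ := ∑ j ∈ Sᶜ, |u j| with hb
  set Q : ℝ := u ⬝ᵥ Chat *ᵥ u with hQ
  set T : ℝ := ∑ j, u j ^ 2 with hT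
  have ha0 : 0 ≤ a := Finset.sum_nonneg fun j _ => abs_nonneg _
  have hb0 : 0 ≤ b := Finset.sum_nonneg fun j _ => abs_nonneg _
  have hT0 : 0 ≤ T := Finset.sum_nonneg fun j _ => sq_nonneg _
  have hab : ∑ j, |u j| = a + b := by
    rw [ha, hb, ← Finset.sum_add_sum_compl S]
  -- consequence of minimality
  have hkey : (1:ℝ)/2 * Q + lam * ((γ - 1)/γ) * (a + b) ≤ 2 * lam * a := by
    have hmin' : (1:ℝ)/2 * Q ≤ (∑ j, (a₀ j - v j) * e j) + lam * (∑ j, |a₀ j| - ∑ j, |v j|) := by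
      have h0 : ((a₀ - a₀ : Fin d → ℝ) ⬝ᵥ Chat *ᵥ (a₀ - a₀)) = 0 := by
        simp
      rw [rowObj, rowObj, h0] at hmin
      have : ∑ j, (a₀ j - v j) * e j = (∑ j, a₀ j * e j) - ∑ j, v j * e j := by
        rw [← Finset.sum_sub_distrib]; exact Finset.sum_congr rfl fun j _ => by ring
      rw [this]
      linarith
    have h1 : ∑ j, (a₀ j - v j) * e j ≤ (lam/γ) * (a + b) := by
      rw [← hab, Finset.mul_sum]
      refine Finset.sum_le_sum fun j _ => ?_
      calc (a₀ j - v j) * e j ≤ |(a₀ j - v j) * e j| := le_abs_self _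
        _ = |u j| * |e j| := by rw [abs_mul, hua, abs_sub_comm]
        _ ≤ |u j| * (lam/γ) := by
            exact mul_le_mul_of_nonneg_left (he j) (abs_nonneg _)
        _ = lam/γ * |u j| := by ring
    have h2 : ∑ j, |a₀ j| - ∑ j, |v j| ≤ a - b := by
      have e1 : ∑ j, |a₀ j| = ∑ j ∈ S, |a₀ j| := by
        rw [← Finset.sum_add_sum_compl S]
        have : ∑ j ∈ Sᶜ, |a₀ j| = 0 := by
          refine Finset.sum_eq_zero fun j hj => ?_
          have : ¬ a₀ j ≠ 0 := by
            simpa [hS] using (Finset.mem_compl.1 hj)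
          simp [not_not.1 this]
        linarith
      have e2 : ∑ j, |v j| = ∑ j ∈ S, |v j| + ∑ j ∈ Sᶜ, |v j| := by
        rw [← Finset.sum_add_sum_compl S]
      have e3 : ∑ j ∈ S, (|a₀ j| - |v j|) ≤ a := by
        rw [ha]
        refine Finset.sum_le_sum fun j _ => ?_
        rw [hua]
        have := abs_sub_abs_le_abs_sub (a₀ j) (v j)
        calc |a₀ j| - |v j| ≤ |a₀ j - v j| := this
          _ = |v j - a₀ j| := abs_sub_comm _ _
      have e4 : ∀ j ∈ Sᶜ, |v j| = |u j| := by
        intro j hj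
        have : ¬ a₀ j ≠ 0 := by simpa [hS] using (Finset.mem_compl.1 hj)
        rw [hua, not_not.1 this, sub_zero]
      have e5 : ∑ j ∈ Sᶜ, |v j| = b := by
        rw [hb]; exact Finset.sum_congr rfl e4
      rw [e1, e2, e5, Finset.sum_sub_distrib] at *
      linarith
    have hq : (γ - 1)/γ = 1 - 1/γ := by field_simp
    have hl1 : lam * (∑ j, |a₀ j| - ∑ j, |v j|) ≤ lam * (a - b) :=
      mul_le_mul_of_nonneg_left h2 hlam.le
    have : (1:ℝ)/2 * Q ≤ lam/γ * (a+b) + lam * (a - b) := by linarith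
    have hexp : lam/γ * (a+b) + lam * (a - b) = 2*lam*a - lam * ((γ-1)/γ) * (a+b) := by
      field_simp; ring
    linarith [hexp ▸ this]
  -- cone membership and RE
  obtain ⟨I, hIcard, hIord, hImax⟩ := topset s hsd u
  set m : ℝ := ∑ i ∈ I, |u i| with hm
  have ham : a ≤ m := hImax S ha₀
  have hQ0 : 0 ≤ Q := by
    have := hC.dotProduct_mulVec_nonneg u
    simpa [hQ, Matrix.PosSemidef] using this
  have hγτ : (0:ℝ) < γ - τ - 1 := by linarith
  have hcone : inCone s c₀ u := by
    refine ⟨I, hIcard, hIord, ?_⟩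
    rw [hab, ← hm, hc₀]
    have h1c : 1 + (γ + τ + 1)/(γ - τ - 1) = 2*γ/(γ - τ - 1) := by field_simp; ring
    rw [h1c]
    rw [div_mul_eq_mul_div, le_div_iff₀ hγτ]
    have hstep : (γ - 1) * (a + b) ≤ 2 * γ * a := by
      have h2 : lam * ((γ-1)/γ) * (a+b) ≤ 2*lam*a := by linarith
      have := (mul_le_mul_iff_of_pos_left (show (0:ℝ) < γ/lam by positivity)).2 h2
      calc (γ-1)*(a+b) = γ/lam * (lam * ((γ-1)/γ) * (a+b)) := by field_simp
        _ ≤ γ/lam * (2*lam*a) := this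
        _ = 2*γ*a := by field_simp
    nlinarith [ham, hb0, ha0]
  have hREu := hRE u hcone
  -- Cauchy–Schwarz : a^2 ≤ s * T
  have hcs : a^2 ≤ s * T := by
    have h1 : a^2 ≤ (S.card : ℝ) * ∑ j ∈ S, u j ^ 2 := by
      have h := Finset.sum_mul_sq_le_sq_mul_sq S (fun _ => (1:ℝ)) (fun j => |u j|)
      have e1 : ∑ j ∈ S, (1:ℝ) * |u j| = a := by
        rw [ha]; exact Finset.sum_congr rfl fun j _ => one_mul _
      have e2 : ∑ j ∈ S, ((1:ℝ))^2 = (S.card:ℝ) := by simp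
      have e3 : ∑ j ∈ S, |u j|^2 = ∑ j ∈ S, u j ^ 2 :=
        Finset.sum_congr rfl fun j _ => sq_abs _
      rw [e1, e2, e3] at h
      exact h
    have h2 : ∑ j ∈ S, u j ^ 2 ≤ T := by
      rw [hT]
      exact Finset.sum_le_sum_of_subset_of_nonneg (Finset.subset_univ S)
        (fun j _ _ => sq_nonneg _)
    have h3 : (S.card : ℝ) ≤ (s : ℝ) := by exact_mod_cast ha₀
    calc a^2 ≤ (S.card:ℝ) * ∑ j ∈ S, u j ^ 2 := h1
      _ ≤ (s:ℝ) * T := by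
        refine mul_le_mul h3 h2 (Finset.sum_nonneg fun j _ => sq_nonneg _) (by positivity)
  -- final computation
  set c : ℝ := (1 + τ + γ)/γ with hcdef
  have hc0 : 0 < c := by rw [hcdef]; positivity
  have hmain : lam * (τ/γ) * (a + b) ≤ lam * c * a - 1/2 * κ^2 * T := by
    have h4 : 1/2 * κ^2 * T ≤ 1/2 * Q := by
      have := hREu
      rw [← hT] at this
      linarith
    have h5 : lam * ((γ - 1 - τ)/γ) * a ≤ lam * ((γ - 1 - τ)/γ) * (a + b) := by
      have : (0:ℝ) ≤ lam * ((γ - 1 - τ)/γ) :=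
        mul_nonneg hlam.le (div_nonneg (by linarith) hγ0.le)
      nlinarith
    have hsplit : lam * ((γ-1)/γ) * (a+b) = lam * (τ/γ) * (a+b) + lam * ((γ-1-τ)/γ) * (a+b) := by
      rw [show (γ-1)/γ = τ/γ + (γ-1-τ)/γ by rw [← add_div]; ring_nf]
      ring
    have hcc : 2*lam*a - lam * ((γ-1-τ)/γ) * a = lam * c * a := by
      rw [hcdef]; field_simp; ring
    nlinarith [hkey]
  have hamgm : lam * c * a ≤ 1/2 * κ^2 * T + lam^2 * c^2 * s / (2 * κ^2) := by
    set x : ℝ := Real.sqrt T with hxdef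
    set y : ℝ := Real.sqrt ((s:ℝ)) with hydef
    have hx2 : x^2 = T := Real.sq_sqrt hT0
    have hy2 : y^2 = (s:ℝ) := Real.sq_sqrt (Nat.cast_nonneg s)
    have hx0 : 0 ≤ x := Real.sqrt_nonneg _
    have hy0 : 0 ≤ y := Real.sqrt_nonneg _
    have hxy : a ≤ x * y := by
      have hsq : a^2 ≤ (x*y)^2 := by
        rw [mul_pow, hx2, hy2]; nlinarith [hcs]
      calc a = Real.sqrt (a^2) := (Real.sqrt_sq ha0).symm
        _ ≤ Real.sqrt ((x*y)^2) := Real.sqrt_le_sqrt hsq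
        _ = x*y := Real.sqrt_sq (mul_nonneg hx0 hy0)
    have hlamca : lam * c * a ≤ lam * c * (x*y) :=
      mul_le_mul_of_nonneg_left hxy (by positivity)
    have hstep : 2*κ^2*(lam*c*(x*y)) ≤ κ^2*κ^2*x^2 + lam^2*c^2*y^2 := by
      nlinarith [sq_nonneg (κ^2*x - lam*c*y)]
    have hnum : 0 ≤ κ^2*κ^2*x^2 + lam^2*c^2*y^2 - 2*κ^2*(lam*c*(x*y)) := by linarith
    have hdiv : 0 ≤ (κ^2*κ^2*x^2 + lam^2*c^2*y^2 - 2*κ^2*(lam*c*(x*y))) / (2*κ^2) :=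
      div_nonneg hnum (by positivity)
    have heq : (κ^2*κ^2*x^2 + lam^2*c^2*y^2 - 2*κ^2*(lam*c*(x*y))) / (2*κ^2)
        = 1/2*κ^2*x^2 + lam^2*c^2*y^2/(2*κ^2) - lam*c*(x*y) := by
      field_simp
    rw [← hx2, ← hy2]
    linarith [heq ▸ hdiv]
  have hfin : lam * (τ/γ) * (a + b) ≤ lam^2 * c^2 * s / (2 * κ^2) := by linarith
  have hpos : (0:ℝ) < lam * (τ/γ) := by positivity
  have habs : ∑ j, |v j - a₀ j| = a + b := by
    rw [← hab]
    exact Finset.sum_congr rfl fun j _ => by rw [hua]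
  rw [habs]
  rw [show (1 + τ + γ)^2 / (2*γ*τ*κ^2) * lam * s = (lam^2 * c^2 * s / (2*κ^2)) / (lam * (τ/γ)) by
    rw [hcdef]; field_simp]
  rw [le_div_iff₀ hpos]
  calc (a + b) * (lam * (τ/γ)) = lam * (τ/γ) * (a+b) := by ring
    _ ≤ _ := hfin

/-- ℓ¹ error bound for the Lasso. -/
theorem stmt_9 (d s : ℕ) (hd : 1 ≤ d) (hs : 1 ≤ s) (hsd : s ≤ d)
    (γ τ lam κ : ℝ) (hγ : 1 < γ) (hτ0 : 0 < τ) (hτ : τ < γ - 1)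
    (hlam : 0 < lam) (hκ : 0 < κ)
    (c₀ : ℝ) (hc₀ : c₀ = (γ + τ + 1) / (γ - τ - 1))
    (Chat eps : Matrix (Fin d) (Fin d) ℝ) (hC : Chat.PosSemidef)
    (hRE : ∀ u : Fin d → ℝ, inCone s c₀ u → κ ^ 2 * ∑ i, u i ^ 2 ≤ u ⬝ᵥ Chat *ᵥ u)
    (heps : ∀ i j, |eps i j| ≤ lam / γ)
    (A₀ : Matrix (Fin d) (Fin d) ℝ) (hA₀ : rowSparse s A₀)
    (Ahat : Matrix (Fin d) (Fin d) ℝ)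
    (hmin : ∀ A : Matrix (Fin d) (Fin d) ℝ,
      lassoObj Chat eps A₀ lam Ahat ≤ lassoObj Chat eps A₀ lam A) :
    matL1 (Ahat - A₀) ≤ (1 + τ + γ) ^ 2 / (2 * γ * τ * κ ^ 2) * lam * d * s := by
  have hrowmin : ∀ i, rowObj Chat (eps i) (A₀ i) lam (Ahat i) ≤
      rowObj Chat (eps i) (A₀ i) lam (A₀ i) := by
    intro i
    have h := hmin (Matrix.updateRow Ahat i (A₀ i))
    rw [lassoObj_eq_sum, lassoObj_eq_sum] at h
    have hsplit1 := (Finset.add_sum_erase Finset.univ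
      (fun k => rowObj Chat (eps k) (A₀ k) lam (Ahat k)) (Finset.mem_univ i)).symm
    have hsplit2 := (Finset.add_sum_erase Finset.univ
      (fun k => rowObj Chat (eps k) (A₀ k) lam (Matrix.updateRow Ahat i (A₀ i) k))
      (Finset.mem_univ i)).symm
    have heq : ∑ k ∈ Finset.univ.erase i,
        rowObj Chat (eps k) (A₀ k) lam (Matrix.updateRow Ahat i (A₀ i) k)
        = ∑ k ∈ Finset.univ.erase i, rowObj Chat (eps k) (A₀ k) lam (Ahat k) := by
      refine Finset.sum_congr rfl fun k hk => ?_
      rw [Matrix.updateRow_ne (Finset.ne_of_mem_erase hk)]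
    rw [heq, Matrix.updateRow_self] at hsplit2
    rw [hsplit1, hsplit2] at h
    linarith
  have hrow : ∀ i, ∑ j, |Ahat i j - A₀ i j| ≤
      (1 + τ + γ) ^ 2 / (2 * γ * τ * κ ^ 2) * lam * s := by
    intro i
    refine row_bound s hsd γ τ lam κ hγ hτ0 hτ hlam hκ c₀ hc₀ Chat hC hRE
      (eps i) (A₀ i) (Ahat i) (fun j => heps i j) ?_ (hrowmin i)
    have h := hA₀ i
    rwa [Set.ncard_eq_toFinset_card', Set.toFinset_setOf] at h
  have hsum : matL1 (Ahat - A₀) ≤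
      ∑ _i : Fin d, ((1 + τ + γ) ^ 2 / (2 * γ * τ * κ ^ 2) * lam * s) := by
    rw [matL1]
    refine Finset.sum_le_sum fun i _ => ?_
    have := hrow i
    simpa [Matrix.sub_apply] using this
  rw [Finset.sum_const, Finset.card_univ, Fintype.card_fin, nsmul_eq_mul] at hsum
  calc matL1 (Ahat - A₀) ≤ (d:ℝ) * ((1 + τ + γ) ^ 2 / (2 * γ * τ * κ ^ 2) * lam * s) := hsum
    _ = (1 + τ + γ) ^ 2 / (2 * γ * τ * κ ^ 2) * lam * d * s := by ring
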